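/- Let q ≥ 3 and h be integers, and consider the formal power series δ(t) = (1 − t)^{−h} (1 − 2t)^{q} (1 − 3t)^{−1} ∈ Z[[t]]. If the coefficients of t and of t^2 in δ(t) are both nonnegative, then 2h ≥ 4q − 7 + √(8q − 23); in particular h ≥ 2q − 3. -/

import Mathlib

/-!
STATEMENT 11.

For integers `q ≥ 3` and `h`, consider
`δ(t) = (1 − t)^{−h} (1 − 2t)^{q} (1 − 3t)^{−1} ∈ ℤ[[t]]`, interpreted via the
group of units of `ℤ[[t]]` (the factors `1 − t`, `1 − 2t`, `1 − 3t` are units,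
and negative exponents are integer powers of units).  If the coefficients of `t`
and `t²` in `δ(t)` are nonnegative, then `2h ≥ 4q − 7 + √(8q − 23)`; in
particular `h ≥ 2q − 3`.
-/

open PowerSeries

private lemma cmul (f g : PowerSeries ℤ) (n : ℕ) :
    (coeff n) (f * g) = ∑ k ∈ Finset.range (n + 1), coeff k f * coeff (n - k) g := by
  rw [PowerSeries.coeff_mul, Finset.Nat.sum_antidiagonal_eq_sum_range_succ_mk]

private lemma coeffs_mul (f g : PowerSeries ℤ)
    (hf0 : coeff 0 f = 1) (hg0 : coeff 0 g = 1) :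
    coeff 0 (f * g) = 1 ∧
    coeff 1 (f * g) = coeff 1 f + coeff 1 g ∧
    coeff 2 (f * g) = coeff 2 f + coeff 1 f * coeff 1 g + coeff 2 g := by
  refine ⟨?_, ?_, ?_⟩ <;>
    · rw [cmul]
      simp [Finset.sum_range_succ, hf0, hg0]
      try ring

private lemma natpow (f : PowerSeries ℤ) (b c : ℤ) (h0 : coeff 0 f = 1)
    (h1 : coeff 1 f = b) (h2 : coeff 2 f = c) (m : ℕ) :
    coeff 0 (f ^ m) = 1 ∧ coeff 1 (f ^ m) = m * b ∧
      2 * coeff 2 (f ^ m) = 2 * m * c + m * (m - 1) * b ^ 2 := by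
  induction m with
  | zero => simp [PowerSeries.coeff_one]
  | succ m ih =>
    obtain ⟨i0, i1, i2⟩ := ih
    obtain ⟨j0, j1, j2⟩ := coeffs_mul (f ^ m) f i0 h0
    rw [pow_succ]
    refine ⟨j0, ?_, ?_⟩
    · rw [j1, i1, h1]; push_cast; ring
    · have e : 2 * coeff 2 (f ^ m * f) =
        2 * coeff 2 (f ^ m) + 2 * coeff 1 (f ^ m) * coeff 1 f + 2 * coeff 2 f := by
        rw [j2]; ring
      rw [e, i2, i1, h1, h2]; push_cast; ring

private lemma zkey (u : (PowerSeries ℤ)ˣ) (a : ℤ)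
    (h0 : coeff 0 (u : PowerSeries ℤ) = 1)
    (h1 : coeff 1 (u : PowerSeries ℤ) = -a)
    (h2 : coeff 2 (u : PowerSeries ℤ) = 0) (n : ℤ) :
    coeff 0 ((u ^ n : (PowerSeries ℤ)ˣ) : PowerSeries ℤ) = 1 ∧
    coeff 1 ((u ^ n : (PowerSeries ℤ)ˣ) : PowerSeries ℤ) = -n * a ∧
    2 * coeff 2 ((u ^ n : (PowerSeries ℤ)ˣ) : PowerSeries ℤ) = n * (n - 1) * a ^ 2 := by
  have e : (u : PowerSeries ℤ) * ((u⁻¹ : (PowerSeries ℤ)ˣ) : PowerSeries ℤ) = 1 := u.mul_inv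
  have e0 : coeff 0 ((u⁻¹ : (PowerSeries ℤ)ˣ) : PowerSeries ℤ) = 1 := by
    have t := congrArg (coeff 0) e
    rw [cmul] at t
    simp [Finset.sum_range_succ, h0, PowerSeries.coeff_one,
      PowerSeries.coeff_zero_eq_constantCoeff] at t ⊢
    exact t
  have e1 : coeff 1 ((u⁻¹ : (PowerSeries ℤ)ˣ) : PowerSeries ℤ) = a := by
    have t := congrArg (coeff 1) e
    rw [cmul] at t
    simp [Finset.sum_range_succ, h0, h1, e0, PowerSeries.coeff_one] at t
    linarith
  have e2 : coeff 2 ((u⁻¹ : (PowerSeries ℤ)ˣ) : PowerSeries ℤ) = a ^ 2 := by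
    have t := congrArg (coeff 2) e
    rw [cmul] at t
    simp [Finset.sum_range_succ, h0, h1, h2, e0, e1, PowerSeries.coeff_one] at t
    nlinarith [t]
  obtain ⟨m, rfl | rfl⟩ := Int.eq_nat_or_neg n
  · have hp : ((u ^ (m : ℤ) : (PowerSeries ℤ)ˣ) : PowerSeries ℤ) = (u : PowerSeries ℤ) ^ m := by
      rw [zpow_natCast]; exact Units.val_pow_eq_pow_val u m
    obtain ⟨k0, k1, k2⟩ := natpow (u : PowerSeries ℤ) (-a) 0 h0 h1 h2 m
    rw [hp]
    exact ⟨k0, by rw [k1]; ring, by rw [k2]; push_cast; ring⟩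
  · have hp : ((u ^ (-(m : ℤ)) : (PowerSeries ℤ)ˣ) : PowerSeries ℤ)
        = ((u⁻¹ : (PowerSeries ℤ)ˣ) : PowerSeries ℤ) ^ m := by
      rw [zpow_neg, zpow_natCast, ← inv_pow]
      exact Units.val_pow_eq_pow_val u⁻¹ m
    obtain ⟨k0, k1, k2⟩ := natpow _ a (a ^ 2) e0 e1 e2 m
    rw [hp]
    exact ⟨k0, by rw [k1]; ring, by rw [k2]; push_cast; ring⟩

theorem stmt11 (q h : ℤ) (hq : 3 ≤ q)
    (u1 u2 u3 : (PowerSeries ℤ)ˣ)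
    (hu1 : (u1 : PowerSeries ℤ) = 1 - PowerSeries.X)
    (hu2 : (u2 : PowerSeries ℤ) = 1 - 2 * PowerSeries.X)
    (hu3 : (u3 : PowerSeries ℤ) = 1 - 3 * PowerSeries.X)
    (δ : PowerSeries ℤ)
    (hδ : δ = ((u1 ^ (-h) * u2 ^ q * u3 ^ (-1 : ℤ) : (PowerSeries ℤ)ˣ) : PowerSeries ℤ))
    (h1 : 0 ≤ PowerSeries.coeff 1 δ)
    (h2 : 0 ≤ PowerSeries.coeff 2 δ) :
    (4 * (q : ℝ) - 7 + Real.sqrt (8 * (q : ℝ) - 23) ≤ 2 * (h : ℝ)) ∧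
      2 * q - 3 ≤ h := by
  have h2C : (2 : PowerSeries ℤ) = (PowerSeries.C (R := ℤ)) 2 := (map_ofNat ((PowerSeries.C (R := ℤ))) 2).symm
  have h3C : (3 : PowerSeries ℤ) = (PowerSeries.C (R := ℤ)) 3 := (map_ofNat ((PowerSeries.C (R := ℤ))) 3).symm
  obtain ⟨a0, a1, a2⟩ := zkey u1 1
    (by simp [hu1, PowerSeries.coeff_zero_eq_constantCoeff])
    (by rw [hu1, map_sub, PowerSeries.coeff_one, PowerSeries.coeff_X]; norm_num)
    (by rw [hu1, map_sub, PowerSeries.coeff_one, PowerSeries.coeff_X]; norm_num) (-h)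
  obtain ⟨b0, b1, b2⟩ := zkey u2 2
    (by simp [hu2, PowerSeries.coeff_zero_eq_constantCoeff])
    (by rw [hu2, map_sub, PowerSeries.coeff_one, h2C, PowerSeries.coeff_C_mul,
        PowerSeries.coeff_X]; norm_num)
    (by rw [hu2, map_sub, PowerSeries.coeff_one, h2C, PowerSeries.coeff_C_mul,
        PowerSeries.coeff_X]; norm_num) q
  obtain ⟨c0, c1, c2⟩ := zkey u3 3
    (by simp [hu3, PowerSeries.coeff_zero_eq_constantCoeff])
    (by rw [hu3, map_sub, PowerSeries.coeff_one, h3C, PowerSeries.coeff_C_mul,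
        PowerSeries.coeff_X]; norm_num)
    (by rw [hu3, map_sub, PowerSeries.coeff_one, h3C, PowerSeries.coeff_C_mul,
        PowerSeries.coeff_X]; norm_num)
    (-1 : ℤ)
  have hδ' : δ = ((u1 ^ (-h) : (PowerSeries ℤ)ˣ) : PowerSeries ℤ) *
      ((u2 ^ q : (PowerSeries ℤ)ˣ) : PowerSeries ℤ) *
      ((u3 ^ (-1 : ℤ) : (PowerSeries ℤ)ˣ) : PowerSeries ℤ) := by
    rw [hδ, Units.val_mul, Units.val_mul]
  obtain ⟨p0, p1, p2⟩ := coeffs_mul _ _ a0 b0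
  obtain ⟨d0, d1, d2⟩ := coeffs_mul _ _ p0 c0
  have hc1 : coeff 1 δ = h - 2 * q + 3 := by
    rw [hδ', d1, p1, a1, b1, c1]; ring
  have hc2 : 2 * coeff 2 δ = h ^ 2 + 7 * h + 4 * q ^ 2 - 16 * q + 18 - 4 * h * q := by
    rw [hδ']
    have e : 2 * coeff 2 (((u1 ^ (-h) : (PowerSeries ℤ)ˣ) : PowerSeries ℤ) *
        ((u2 ^ q : (PowerSeries ℤ)ˣ) : PowerSeries ℤ) *
        ((u3 ^ (-1 : ℤ) : (PowerSeries ℤ)ˣ) : PowerSeries ℤ)) =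
        (2 * coeff 2 ((u1 ^ (-h) : (PowerSeries ℤ)ˣ) : PowerSeries ℤ)
          + 2 * coeff 1 ((u1 ^ (-h) : (PowerSeries ℤ)ˣ) : PowerSeries ℤ)
            * coeff 1 ((u2 ^ q : (PowerSeries ℤ)ˣ) : PowerSeries ℤ)
          + 2 * coeff 2 ((u2 ^ q : (PowerSeries ℤ)ˣ) : PowerSeries ℤ))
        + 2 * (coeff 1 ((u1 ^ (-h) : (PowerSeries ℤ)ˣ) : PowerSeries ℤ)
            + coeff 1 ((u2 ^ q : (PowerSeries ℤ)ˣ) : PowerSeries ℤ))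
            * coeff 1 ((u3 ^ (-1 : ℤ) : (PowerSeries ℤ)ˣ) : PowerSeries ℤ)
        + 2 * coeff 2 ((u3 ^ (-1 : ℤ) : (PowerSeries ℤ)ˣ) : PowerSeries ℤ) := by
      rw [d2, p2, p1]; ring
    rw [e, a2, b2, c2, a1, b1, c1]; ring
  have hh : 2 * q - 3 ≤ h := by rw [hc1] at h1; linarith
  refine ⟨?_, hh⟩
  have H2 : (0 : ℤ) ≤ h ^ 2 + 7 * h + 4 * q ^ 2 - 16 * q + 18 - 4 * h * q := by
    rw [← hc2]; linarith
  have H1R : (0 : ℝ) ≤ (h : ℝ) - (2 * q - 3) := by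
    have := hh; push_cast; exact_mod_cast sub_nonneg.mpr (by exact_mod_cast this)
  have H2R : (0 : ℝ) ≤ (h : ℝ) ^ 2 + 7 * h + 4 * q ^ 2 - 16 * q + 18 - 4 * h * q := by
    exact_mod_cast H2
  have hpos : (0 : ℝ) ≤ 2 * (h : ℝ) - 4 * q + 7 := by linarith
  have hsq : 8 * (q : ℝ) - 23 ≤ (2 * (h : ℝ) - 4 * q + 7) ^ 2 := by nlinarith
  have hs := Real.sqrt_le_sqrt hsq
  rw [Real.sqrt_sq hpos] at hs
  linarith
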